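/- Let ρ₁ and ρ₂ be two real-valued pluriharmonic functions on a connected complex manifold X. Then the differentials dρ₁ and dρ₂ are linearly dependent (i.e., 1, ρ₁, ρ₂ are linearly dependent as functions) if and only if dρ₁ ∧ dρ₂ ≡ 0 on X. -/

import Mathlib

open Filter Set Metric

section helpers
variable {E : Type*} [NormedAddCommGroup E] [NormedSpace ℂ E]


/-- Derivative of a real-linear functional composed with a holomorphic function. -/
lemma aux_comp_hasFDerivAt {f : E → ℂ} {x : E} (hd : DifferentiableAt ℂ f x)
    (π : ℂ →L[ℝ] ℝ) :
    HasFDerivAt (fun y => π (f y)) (π.comp ((fderiv ℂ f x).restrictScalars ℝ)) x :=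
  π.hasFDerivAt.comp x (hd.hasFDerivAt.restrictScalars ℝ)

/-- If `ρ = Re f` on a neighborhood of `x` with `f` holomorphic, then `ρ` is differentiable
at `x` and its differential is the real part of the complex differential of `f`. -/
lemma aux_fderivRe {ρ : E → ℝ} {f : E → ℂ} {V : Set E} (hf : DifferentiableOn ℂ f V)
    (hρ : ∀ y ∈ V, ρ y = (f y).re) {x : E} (hx : V ∈ nhds x) :
    DifferentiableAt ℝ ρ x ∧ ∀ w, fderiv ℝ ρ x w = ((fderiv ℂ f x) w).re := by
  have hd : DifferentiableAt ℂ f x := hf.differentiableAt hx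
  have h2 := aux_comp_hasFDerivAt hd Complex.reCLM
  have heq : ρ =ᶠ[nhds x] fun y => (f y).re := by
    filter_upwards [hx] with y hy using hρ y hy
  have h3 : HasFDerivAt ρ (Complex.reCLM.comp ((fderiv ℂ f x).restrictScalars ℝ)) x :=
    h2.congr_of_eventuallyEq heq
  exact ⟨h3.differentiableAt, fun w => by rw [h3.fderiv]; rfl⟩

/-- A complex-linear functional with vanishing real part is zero. -/
lemma aux_fzero (g : E →L[ℂ] ℂ) (h : ∀ w, (g w).re = 0) : g = 0 := by
  ext w
  have h1 := h w
  have h2 := h (Complex.I • w)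
  rw [map_smul] at h2
  simp only [smul_eq_mul, Complex.mul_re, Complex.I_re, Complex.I_im] at h2
  apply Complex.ext
  · simpa using h1
  · simp only [ContinuousLinearMap.zero_apply, Complex.zero_im]
    nlinarith


lemma aux_pointwise (g₁ g₂ : E →L[ℂ] ℂ)
    (h : ∀ v w : E, (g₁ v).re * (g₂ w).re = (g₁ w).re * (g₂ v).re) :
    g₁ = 0 ∨ ∃ t : ℝ, ∀ w, g₂ w = (t : ℂ) * g₁ w := by
  by_cases hg : g₁ = 0
  · exact Or.inl hg
  right
  obtain ⟨u, hu⟩ : ∃ u, g₁ u ≠ 0 := by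
    by_contra hc; push_neg at hc; exact hg (ContinuousLinearMap.ext fun u => hc u)
  set v := (g₁ u)⁻¹ • u with hv
  have hgv : g₁ v = 1 := by
    simp [hv, map_smul, smul_eq_mul, inv_mul_cancel₀ hu]
  have e1 : ∀ (g : E →L[ℂ] ℂ) (w : E), g (Complex.I • w) = Complex.I * g w := fun g w => by
    rw [map_smul]; simp [smul_eq_mul]
  have him : (g₂ v).im = 0 := by
    have h2 := h (Complex.I • v) v
    rw [e1, e1, hgv, mul_one] at h2
    simp only [Complex.mul_re, Complex.I_re, Complex.I_im, Complex.one_re, Complex.one_im] at h2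
    linarith
  have key : ∀ w, (g₂ w).re = (g₂ v).re * (g₁ w).re := by
    intro w
    have h2 := h v w
    rw [hgv] at h2
    simp only [Complex.one_re, one_mul] at h2
    linarith
  refine ⟨(g₂ v).re, fun w => ?_⟩
  have key2 : (g₂ w).im = (g₂ v).re * (g₁ w).im := by
    have h2 := key (Complex.I • w)
    rw [e1, e1] at h2
    simp only [Complex.mul_re, Complex.I_re, Complex.I_im] at h2
    linarith
  apply Complex.ext
  · rw [key w]
    simp [Complex.mul_re]
  · rw [key2]
    simp [Complex.mul_im]

lemma aux_const {F : Type*} [NormedAddCommGroup F] [NormedSpace ℂ F]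
    {s : Set E} (hs : Convex ℝ s) {f : E → F}
    (hf : ∀ x ∈ s, HasFDerivWithinAt f (0 : E →L[ℂ] F) s x) {x y : E}
    (hx : x ∈ s) (hy : y ∈ s) : f x = f y := by
  have h0 := hs.norm_image_sub_le_of_norm_hasFDerivWithin_le (C := 0) (f' := fun _ => 0) hf
    (fun z hz => by simp) hx hy
  rw [zero_mul] at h0
  have : dist (f y) (f x) ≤ 0 := by rwa [dist_eq_norm]
  exact (dist_le_zero.mp this).symm

lemma aux_line_convex {B : Set E} (hB : Convex ℝ B) (y v : E) :
    Convex ℝ {t : ℂ | y + t • v ∈ B} := by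
  intro t₁ h₁ t₂ h₂ a b ha hb hab
  have key : y + (a • t₁ + b • t₂) • v = a • (y + t₁ • v) + b • (y + t₂ • v) := by
    calc y + (a • t₁ + b • t₂) • v
        = (a • y + b • y) + (a • (t₁ • v) + b • (t₂ • v)) := by
          rw [Convex.combo_self hab, add_smul, smul_assoc, smul_assoc]
      _ = a • (y + t₁ • v) + b • (y + t₂ • v) := by rw [smul_add, smul_add]; abel
  show y + (a • t₁ + b • t₂) • v ∈ B
  rw [key]
  exact hB h₁ h₂ ha hb hab

lemma aux_line_open {B : Set E} (hB : IsOpen B) (y v : E) :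
    IsOpen {t : ℂ | y + t • v ∈ B} :=
  hB.preimage (continuous_const.add (continuous_id.smul continuous_const))

lemma aux_lineDeriv {B : Set E} (hB : IsOpen B) {f : E → ℂ} (hf : DifferentiableOn ℂ f B)
    (y v : E) {t : ℂ} (ht : y + t • v ∈ B) :
    HasDerivAt (fun s : ℂ => f (y + s • v)) (fderiv ℂ f (y + t • v) v) t := by
  have h1 : HasDerivAt (fun s : ℂ => y + s • v) v t := by
    simpa using ((hasDerivAt_id t).smul_const v).const_add y
  have h2 : HasFDerivAt f (fderiv ℂ f (y + t • v)) (y + t • v) :=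
    (hf.differentiableAt (hB.mem_nhds ht)).hasFDerivAt
  exact h2.comp_hasDerivAt t h1

lemma aux_imzero_deriv {W : Set ℂ} (hW : IsOpen W) {ψ : ℂ → ℂ} (hψ : DifferentiableOn ℂ ψ W)
    (him : ∀ t ∈ W, (ψ t).im = 0) : ∀ t ∈ W, deriv ψ t = 0 := by
  intro t ht
  have hd : DifferentiableAt ℂ ψ t := hψ.differentiableAt (hW.mem_nhds ht)
  have hev : (fun s => (ψ s).im) =ᶠ[nhds t] fun _ => (0 : ℝ) := by
    filter_upwards [hW.mem_nhds ht] with s hs using him s hs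
  have hF0 := aux_comp_hasFDerivAt hd Complex.imCLM
  have hzero : Complex.imCLM.comp ((fderiv ℂ ψ t).restrictScalars ℝ) = 0 := by
    have h1 : HasFDerivAt (fun s => (ψ s).im) (0 : ℂ →L[ℝ] ℝ) t :=
      (hasFDerivAt_const (0:ℝ) t).congr_of_eventuallyEq hev
    exact hF0.unique h1
  have happ : ∀ w : ℂ, ((fderiv ℂ ψ t) w).im = 0 := fun w => by
    have := congrFun (congrArg (fun (L : ℂ →L[ℝ] ℝ) => (L : ℂ → ℝ)) hzero) w
    simpa using this
  have h1 := happ 1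
  rw [fderiv_apply_one_eq_deriv] at h1
  have h2 := happ Complex.I
  have h2' : ((fderiv ℂ ψ t) Complex.I) = Complex.I * deriv ψ t := by
    calc (fderiv ℂ ψ t) Complex.I = (fderiv ℂ ψ t) (Complex.I • (1:ℂ)) := by simp
      _ = Complex.I * deriv ψ t := by rw [map_smul, smul_eq_mul, fderiv_apply_one_eq_deriv]
  rw [h2'] at h2
  simp only [Complex.mul_im, Complex.I_re, Complex.I_im] at h2
  have hre : (deriv ψ t).re = 0 := by linarith
  exact Complex.ext (by simpa using hre) (by simpa using h1)

/-- Core one-dimensional lemma: pointwise real-dependence of derivatives of holomorphic functions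
propagates a real ratio along a connected set. -/
lemma aux_oneD {Ω : Set ℂ} (hΩ : IsOpen Ω) (hpre : IsPreconnected Ω) {φ₁ φ₂ : ℂ → ℂ}
    (h1 : DifferentiableOn ℂ φ₁ Ω) (h2 : DifferentiableOn ℂ φ₂ Ω)
    (hdep : ∀ t ∈ Ω, deriv φ₁ t = 0 ∨ ∃ s : ℝ, deriv φ₂ t = (s : ℂ) * deriv φ₁ t)
    {t₀ : ℂ} (ht₀ : t₀ ∈ Ω) {μ : ℝ} (hμ : deriv φ₂ t₀ = (μ : ℂ) * deriv φ₁ t₀)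
    (hne : deriv φ₁ t₀ ≠ 0) :
    ∀ t ∈ Ω, deriv φ₂ t = (μ : ℂ) * deriv φ₁ t := by
  have A1 : AnalyticOnNhd ℂ (deriv φ₁) Ω := (h1.analyticOnNhd hΩ).deriv
  have A2 : AnalyticOnNhd ℂ (deriv φ₂) Ω := (h2.analyticOnNhd hΩ).deriv
  have AF : AnalyticOnNhd ℂ (fun t => deriv φ₂ t - (μ:ℂ) * deriv φ₁ t) Ω :=
    A2.sub (analyticOnNhd_const.mul A1)
  have hΩ'o : IsOpen {t | t ∈ Ω ∧ deriv φ₁ t ≠ 0} := by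
    rw [isOpen_iff_mem_nhds]
    rintro t ⟨htΩ, htne⟩
    have hc : ContinuousAt (deriv φ₁) t := (A1 t htΩ).continuousAt
    filter_upwards [hΩ.mem_nhds htΩ, hc.eventually_ne htne] with s hs1 hs2
    exact ⟨hs1, hs2⟩
  set ψ := fun t => deriv φ₂ t / deriv φ₁ t with hψ
  have hψd : DifferentiableOn ℂ ψ {t | t ∈ Ω ∧ deriv φ₁ t ≠ 0} := fun t ht =>
    (((A2 t ht.1).differentiableAt).div ((A1 t ht.1).differentiableAt) ht.2).differentiableWithinAt
  have hψim : ∀ t ∈ {t | t ∈ Ω ∧ deriv φ₁ t ≠ 0}, (ψ t).im = 0 := by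
    rintro t ⟨htΩ, htne⟩
    rcases hdep t htΩ with h | ⟨s, hs⟩
    · exact absurd h htne
    · have : ψ t = (s : ℂ) := by
        rw [hψ]
        simp only []
        rw [hs, mul_div_assoc, div_self htne, mul_one]
      rw [this]; simp
  have hder0 := aux_imzero_deriv hΩ'o hψd hψim
  obtain ⟨ε, hε, hball⟩ := Metric.isOpen_iff.1 hΩ'o t₀ ⟨ht₀, hne⟩
  have hψconst : ∀ t ∈ Metric.ball t₀ ε, ψ t = ψ t₀ := by
    intro t ht
    refine aux_const (E := ℂ) (convex_ball t₀ ε) ?_ ht (Metric.mem_ball_self hε)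
    intro s hs
    have hds : DifferentiableAt ℂ ψ s := hψd.differentiableAt (hΩ'o.mem_nhds (hball hs))
    have hDA := hds.hasDerivAt
    rw [hder0 s (hball hs)] at hDA
    have hF : HasFDerivAt ψ (0 : ℂ →L[ℂ] ℂ) s := by
      have h' := hasDerivAt_iff_hasFDerivAt.1 hDA
      have : (ContinuousLinearMap.toSpanSingleton ℂ (0:ℂ)) = 0 := by
        ext
        simp
      rwa [this] at h'
    exact hF.hasFDerivWithinAt
  have hψt₀ : ψ t₀ = (μ : ℂ) := by
    rw [hψ]
    simp only []
    rw [hμ, mul_div_assoc, div_self hne, mul_one]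
  have hF0 : (fun t => deriv φ₂ t - (μ:ℂ) * deriv φ₁ t) =ᶠ[nhds t₀] 0 := by
    filter_upwards [Metric.ball_mem_nhds t₀ hε] with t ht
    have h1t : deriv φ₁ t ≠ 0 := (hball ht).2
    have hval : deriv φ₂ t = ψ t * deriv φ₁ t := by
      rw [hψ]; field_simp
    rw [Pi.zero_apply, hval, hψconst t ht, hψt₀]
    ring
  have hEq := AF.eqOn_zero_of_preconnected_of_eventuallyEq_zero hpre ht₀ hF0
  intro t ht
  have h0 := hEq ht
  simp only [Pi.zero_apply] at h0
  have := sub_eq_zero.mp h0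
  exact this


/-- Along a complex line through `y₁`, in a direction where `f₁'` does not vanish,
the combination `f₂ - μ f₁` is constant. -/
lemma aux_lineLemma {B : Set E} (hBo : IsOpen B) (hBc : Convex ℝ B)
    {f₁ f₂ : E → ℂ} (h1 : DifferentiableOn ℂ f₁ B) (h2 : DifferentiableOn ℂ f₂ B)
    (hdep : ∀ y ∈ B, fderiv ℂ f₁ y = 0 ∨ ∃ s : ℝ, ∀ w, fderiv ℂ f₂ y w = (s:ℂ) * fderiv ℂ f₁ y w)
    {y₁ : E} (hy₁ : y₁ ∈ B) {μ : ℝ} (hμ : ∀ w, fderiv ℂ f₂ y₁ w = (μ:ℂ) * fderiv ℂ f₁ y₁ w)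
    {v : E} (hv : fderiv ℂ f₁ y₁ v ≠ 0) {t : ℂ} (ht : y₁ + t • v ∈ B) :
    f₂ (y₁ + t • v) - (μ:ℂ) * f₁ (y₁ + t • v) = f₂ y₁ - (μ:ℂ) * f₁ y₁ := by
  set Ω := {s : ℂ | y₁ + s • v ∈ B} with hΩdef
  have hΩo : IsOpen Ω := aux_line_open hBo y₁ v
  have hΩc : Convex ℝ Ω := aux_line_convex hBc y₁ v
  have h0mem : (0:ℂ) ∈ Ω := by
    show y₁ + (0:ℂ) • v ∈ B
    simpa using hy₁
  have htmem : t ∈ Ω := ht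
  have hy0 : y₁ + (0:ℂ) • v = y₁ := by simp
  have hd1 : ∀ s ∈ Ω, HasDerivAt (fun s : ℂ => f₁ (y₁ + s • v)) (fderiv ℂ f₁ (y₁ + s • v) v) s :=
    fun s hs => aux_lineDeriv hBo h1 y₁ v hs
  have hd2 : ∀ s ∈ Ω, HasDerivAt (fun s : ℂ => f₂ (y₁ + s • v)) (fderiv ℂ f₂ (y₁ + s • v) v) s :=
    fun s hs => aux_lineDeriv hBo h2 y₁ v hs
  have hdiff1 : DifferentiableOn ℂ (fun s : ℂ => f₁ (y₁ + s • v)) Ω :=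
    fun s hs => ((hd1 s hs).differentiableAt).differentiableWithinAt
  have hdiff2 : DifferentiableOn ℂ (fun s : ℂ => f₂ (y₁ + s • v)) Ω :=
    fun s hs => ((hd2 s hs).differentiableAt).differentiableWithinAt
  have hder1 : ∀ s ∈ Ω, deriv (fun s : ℂ => f₁ (y₁ + s • v)) s = fderiv ℂ f₁ (y₁ + s • v) v :=
    fun s hs => (hd1 s hs).deriv
  have hder2 : ∀ s ∈ Ω, deriv (fun s : ℂ => f₂ (y₁ + s • v)) s = fderiv ℂ f₂ (y₁ + s • v) v :=
    fun s hs => (hd2 s hs).deriv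
  have hdepΩ : ∀ s ∈ Ω, deriv (fun s : ℂ => f₁ (y₁ + s • v)) s = 0 ∨
      ∃ r : ℝ, deriv (fun s : ℂ => f₂ (y₁ + s • v)) s = (r:ℂ) * deriv (fun s : ℂ => f₁ (y₁ + s • v)) s := by
    intro s hs
    rcases hdep _ hs with h | ⟨r, hr⟩
    · left; rw [hder1 s hs, h]; simp
    · right; exact ⟨r, by rw [hder1 s hs, hder2 s hs]; exact hr v⟩
  have hμ0 : deriv (fun s : ℂ => f₂ (y₁ + s • v)) 0 = (μ:ℂ) * deriv (fun s : ℂ => f₁ (y₁ + s • v)) 0 := by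
    rw [hder1 0 h0mem, hder2 0 h0mem, hy0]; exact hμ v
  have hne0 : deriv (fun s : ℂ => f₁ (y₁ + s • v)) 0 ≠ 0 := by
    rw [hder1 0 h0mem, hy0]; exact hv
  have key := aux_oneD hΩo hΩc.isPreconnected hdiff1 hdiff2 hdepΩ h0mem hμ0 hne0
  have hconst : (fun s : ℂ => f₂ (y₁ + s • v) - (μ:ℂ) * f₁ (y₁ + s • v)) t =
      (fun s : ℂ => f₂ (y₁ + s • v) - (μ:ℂ) * f₁ (y₁ + s • v)) 0 := by
    refine aux_const (E := ℂ) (f := fun s : ℂ => f₂ (y₁ + s • v) - (μ:ℂ) * f₁ (y₁ + s • v)) hΩc ?_ htmem h0mem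
    intro s hs
    have hDA : HasDerivAt (fun s : ℂ => f₂ (y₁ + s • v) - (μ:ℂ) * f₁ (y₁ + s • v))
        (fderiv ℂ f₂ (y₁ + s • v) v - (μ:ℂ) * fderiv ℂ f₁ (y₁ + s • v) v) s :=
      (hd2 s hs).sub ((hd1 s hs).const_mul ((μ:ℂ)))
    have hval : fderiv ℂ f₂ (y₁ + s • v) v - (μ:ℂ) * fderiv ℂ f₁ (y₁ + s • v) v = 0 := by
      have := key s hs
      rw [hder1 s hs, hder2 s hs] at this
      rw [this]; ring
    rw [hval] at hDA
    have hF : HasFDerivAt (fun s : ℂ => f₂ (y₁ + s • v) - (μ:ℂ) * f₁ (y₁ + s • v))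
        (0 : ℂ →L[ℂ] ℂ) s := by
      have h' := hasDerivAt_iff_hasFDerivAt.1 hDA
      have hz : (ContinuousLinearMap.toSpanSingleton ℂ (0:ℂ)) = 0 := by
        ext; simp
      rwa [hz] at h'
    exact hF.hasFDerivWithinAt
  simpa [hy0] using hconst

/-- Ball lemma: on a convex open set, if `f₂' = μ f₁'` at `y₁` with `f₁' y₁ ≠ 0` and the
derivatives are pointwise really-dependent, then `f₂ - μ f₁` is constant. -/
lemma aux_ballLemma {B : Set E} (hBo : IsOpen B) (hBc : Convex ℝ B)
    {f₁ f₂ : E → ℂ} (h1 : DifferentiableOn ℂ f₁ B) (h2 : DifferentiableOn ℂ f₂ B)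
    (hdep : ∀ y ∈ B, fderiv ℂ f₁ y = 0 ∨ ∃ s : ℝ, ∀ w, fderiv ℂ f₂ y w = (s:ℂ) * fderiv ℂ f₁ y w)
    {y₁ : E} (hy₁ : y₁ ∈ B) {μ : ℝ} (hμ : ∀ w, fderiv ℂ f₂ y₁ w = (μ:ℂ) * fderiv ℂ f₁ y₁ w)
    {u : E} (hu : fderiv ℂ f₁ y₁ u ≠ 0) :
    ∀ z ∈ B, f₂ z - (μ:ℂ) * f₁ z = f₂ y₁ - (μ:ℂ) * f₁ y₁ := by
  intro z hz
  by_cases hcase : fderiv ℂ f₁ y₁ (z - y₁) ≠ 0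
  · have hmem : y₁ + (1:ℂ) • (z - y₁) ∈ B := by simpa using hz
    have := aux_lineLemma hBo hBc h1 h2 hdep hy₁ hμ hcase hmem
    simpa using this
  · push_neg at hcase
    have hcont : ContinuousAt (fun w => f₂ w - (μ:ℂ) * f₁ w) z :=
      ((h2.differentiableAt (hBo.mem_nhds hz)).sub
        ((h1.differentiableAt (hBo.mem_nhds hz)).const_mul _)).continuousAt
    have hpath : Continuous (fun t : ℝ => z + t • u) :=
      continuous_const.add (continuous_id.smul continuous_const)
    have htend0 : Filter.Tendsto (fun t : ℝ => z + t • u) (nhds 0) (nhds z) := by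
      have := hpath.tendsto 0
      simpa using this
    have hin : {t : ℝ | z + t • u ∈ B} ∈ nhds (0:ℝ) := htend0 (hBo.mem_nhds hz)
    have hev : ∀ᶠ t : ℝ in nhdsWithin 0 {(0:ℝ)}ᶜ,
        f₂ (z + t • u) - (μ:ℂ) * f₁ (z + t • u) = f₂ y₁ - (μ:ℂ) * f₁ y₁ := by
      filter_upwards [nhdsWithin_le_nhds hin, self_mem_nhdsWithin] with t htB htne
      have hsplit : z + t • u - y₁ = (z - y₁) + t • u := by abel
      have hv' : fderiv ℂ f₁ y₁ (z + t • u - y₁) ≠ 0 := by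
        rw [hsplit, map_add, hcase, zero_add, ContinuousLinearMap.map_smul_of_tower]
        have htne' : (t:ℝ) ≠ 0 := htne
        intro hcon
        exact hu (by simpa [smul_eq_zero, htne'] using hcon)
      have hmem2 : y₁ + (1:ℂ) • (z + t • u - y₁) ∈ B := by simpa using htB
      have := aux_lineLemma hBo hBc h1 h2 hdep hy₁ hμ hv' hmem2
      simpa using this
    have hlim1 : Filter.Tendsto (fun t : ℝ => f₂ (z + t • u) - (μ:ℂ) * f₁ (z + t • u))
        (nhdsWithin 0 {(0:ℝ)}ᶜ) (nhds (f₂ z - (μ:ℂ) * f₁ z)) :=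
      (hcont.tendsto.comp (htend0.mono_left nhdsWithin_le_nhds))
    have hlim2 : Filter.Tendsto (fun t : ℝ => f₂ (z + t • u) - (μ:ℂ) * f₁ (z + t • u))
        (nhdsWithin 0 {(0:ℝ)}ᶜ) (nhds (f₂ y₁ - (μ:ℂ) * f₁ y₁)) :=
      Filter.Tendsto.congr' (by filter_upwards [hev] with t ht using ht.symm) tendsto_const_nhds
    exact tendsto_nhds_unique hlim1 hlim2

/-- A holomorphic function on a convex open set whose derivative vanishes near a point
is constant. -/
lemma aux_holoConstProp {B : Set E} (hBo : IsOpen B) (hBc : Convex ℝ B)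
    {f : E → ℂ} (hf : DifferentiableOn ℂ f B) {y : E} (hy : y ∈ B)
    {N : Set E} (hN : N ∈ nhds y) (hN0 : ∀ p ∈ N, fderiv ℂ f p = 0) :
    ∀ z ∈ B, f z = f y := by
  intro z hz
  set Ω := {s : ℂ | y + s • (z - y) ∈ B} with hΩdef
  have hΩo : IsOpen Ω := aux_line_open hBo y (z - y)
  have hΩc : Convex ℝ Ω := aux_line_convex hBc y (z - y)
  have h0mem : (0:ℂ) ∈ Ω := by
    show y + (0:ℂ) • (z - y) ∈ B
    simpa using hy
  have h1mem : (1:ℂ) ∈ Ω := by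
    show y + (1:ℂ) • (z - y) ∈ B
    simpa using hz
  have hd : ∀ s ∈ Ω, HasDerivAt (fun s : ℂ => f (y + s • (z - y)))
      (fderiv ℂ f (y + s • (z - y)) (z - y)) s := fun s hs => aux_lineDeriv hBo hf y _ hs
  have hdiff : DifferentiableOn ℂ (fun s : ℂ => f (y + s • (z - y))) Ω :=
    fun s hs => ((hd s hs).differentiableAt).differentiableWithinAt
  have hA : AnalyticOnNhd ℂ (deriv (fun s : ℂ => f (y + s • (z - y)))) Ω :=
    (hdiff.analyticOnNhd hΩo).deriv
  have hev : deriv (fun s : ℂ => f (y + s • (z - y))) =ᶠ[nhds 0] 0 := by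
    have hcont : Continuous (fun s : ℂ => y + s • (z - y)) :=
      continuous_const.add (continuous_id.smul continuous_const)
    have htend : Filter.Tendsto (fun s : ℂ => y + s • (z - y)) (nhds 0) (nhds y) := by
      have := hcont.tendsto 0
      simpa using this
    filter_upwards [htend hN, hΩo.mem_nhds h0mem] with s hsN hsΩ
    rw [(hd s hsΩ).deriv, hN0 _ hsN]
    simp
  have hEq := hA.eqOn_zero_of_preconnected_of_eventuallyEq_zero hΩc.isPreconnected h0mem hev
  have hconst : (fun s : ℂ => f (y + s • (z - y))) 1 = (fun s : ℂ => f (y + s • (z - y))) 0 := by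
    refine aux_const (E := ℂ) (f := fun s : ℂ => f (y + s • (z - y))) hΩc ?_ h1mem h0mem
    intro s hs
    have hDA := hd s hs
    have h0 : fderiv ℂ f (y + s • (z - y)) (z - y) = 0 := by
      have h' := hEq hs
      rwa [(hd s hs).deriv] at h'
    rw [h0] at hDA
    have hF : HasFDerivAt (fun s : ℂ => f (y + s • (z - y))) (0 : ℂ →L[ℂ] ℂ) s := by
      have h' := hasDerivAt_iff_hasFDerivAt.1 hDA
      have hz' : (ContinuousLinearMap.toSpanSingleton ℂ (0:ℂ)) = 0 := by
        ext; simp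
      rwa [hz'] at h'
    exact hF.hasFDerivWithinAt
  simpa using hconst

/-- A holomorphic function whose real part is constant on an open set has zero derivative. -/
lemma aux_reConst {W : Set E} (hW : IsOpen W) {f : E → ℂ} (hf : DifferentiableOn ℂ f W)
    {c : ℝ} (hc : ∀ y ∈ W, (f y).re = c) : ∀ p ∈ W, fderiv ℂ f p = 0 := by
  intro p hp
  apply aux_fzero
  intro w
  have hd := hf.differentiableAt (hW.mem_nhds hp)
  have hF := aux_comp_hasFDerivAt hd Complex.reCLM
  have hev : (fun y => Complex.reCLM (f y)) =ᶠ[nhds p] fun _ => c := by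
    filter_upwards [hW.mem_nhds hp] with y hy using hc y hy
  have h0 : HasFDerivAt (fun y => Complex.reCLM (f y)) (0 : E →L[ℝ] ℝ) p :=
    (hasFDerivAt_const c p).congr_of_eventuallyEq hev
  have huniq := hF.unique h0
  have happ := congrFun (congrArg (fun (L : E →L[ℝ] ℝ) => (L : E → ℝ)) huniq) w
  simpa using happ


end helpers

/-- `ρ` is pluriharmonic on `U`: locally the real part of a holomorphic function. -/
def PluriharmonicOn {E : Type*} [NormedAddCommGroup E] [NormedSpace ℂ E]
    (ρ : E → ℝ) (U : Set E) : Prop :=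
  ∀ x ∈ U, ∃ V ∈ nhds x, V ⊆ U ∧
    ∃ f : E → ℂ, DifferentiableOn ℂ f V ∧ ∀ y ∈ V, ρ y = (f y).re

section main
variable {E : Type*} [NormedAddCommGroup E] [NormedSpace ℂ E]

lemma aux_rep_ball {ρ₁ ρ₂ : E → ℝ} {U : Set E} (h₁ : PluriharmonicOn ρ₁ U)
    (h₂ : PluriharmonicOn ρ₂ U) {x : E} (hx : x ∈ U) :
    ∃ r > 0, Metric.ball x r ⊆ U ∧ ∃ f₁ f₂ : E → ℂ,
      DifferentiableOn ℂ f₁ (Metric.ball x r) ∧ DifferentiableOn ℂ f₂ (Metric.ball x r) ∧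
      (∀ y ∈ Metric.ball x r, ρ₁ y = (f₁ y).re) ∧ (∀ y ∈ Metric.ball x r, ρ₂ y = (f₂ y).re) := by
  obtain ⟨V₁, hV₁, hV₁U, f₁, hf₁, hρ₁⟩ := h₁ x hx
  obtain ⟨V₂, hV₂, hV₂U, f₂, hf₂, hρ₂⟩ := h₂ x hx
  obtain ⟨r, hr, hball⟩ := Metric.mem_nhds_iff.1 (Filter.inter_mem hV₁ hV₂)
  exact ⟨r, hr, fun y hy => hV₁U (hball hy).1, f₁, f₂,
    hf₁.mono (fun y hy => (hball hy).1), hf₂.mono (fun y hy => (hball hy).2),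
    fun y hy => hρ₁ y (hball hy).1, fun y hy => hρ₂ y (hball hy).2⟩

/-- Identity-type principle: a pluriharmonic function on a connected open set which is
constant near one point is constant. -/
lemma aux_propagation {U : Set E} (_hU : IsOpen U) (hpre : IsPreconnected U)
    {ρ : E → ℝ} (hρ : PluriharmonicOn ρ U) {x₀ : E} (hx₀ : x₀ ∈ U) {c : ℝ}
    (hloc : ∀ᶠ y in nhds x₀, ρ y = c) : ∀ x ∈ U, ρ x = c := by
  have key : ∀ x ∈ U, x ∈ closure (interior {y | ρ y = c}) → x ∈ interior {y | ρ y = c} := by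
    intro x hxU hxcl
    obtain ⟨V, hV, hVU, f, hfd, hρf⟩ := hρ x hxU
    obtain ⟨r, hr, hball⟩ := Metric.mem_nhds_iff.1 hV
    obtain ⟨y, hyB, hyI⟩ : (Metric.ball x r ∩ interior {y | ρ y = c}).Nonempty := by
      have := mem_closure_iff.1 hxcl _ Metric.isOpen_ball (Metric.mem_ball_self hr)
      exact this
    set N := Metric.ball x r ∩ interior {y | ρ y = c} with hNdef
    have hNo : IsOpen N := Metric.isOpen_ball.inter isOpen_interior
    have hfB : DifferentiableOn ℂ f (Metric.ball x r) := hfd.mono hball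
    have hre : ∀ p ∈ N, (f p).re = c := fun p hp => by
      rw [← hρf p (hball hp.1)]
      have hmem : p ∈ {y | ρ y = c} := interior_subset hp.2
      exact hmem
    have hzero : ∀ p ∈ N, fderiv ℂ f p = 0 :=
      aux_reConst hNo (hfd.mono (fun p hp => hball hp.1)) hre
    have hconst := aux_holoConstProp Metric.isOpen_ball (convex_ball x r) hfB hyB
      (hNo.mem_nhds ⟨hyB, hyI⟩) hzero
    have hyc : ρ y = c := by
      have hmem : y ∈ {y | ρ y = c} := interior_subset hyI
      exact hmem
    have hsub : Metric.ball x r ⊆ {y | ρ y = c} := by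
      intro z hzB
      show ρ z = c
      have hz' : ρ z = (f z).re := hρf z (hball hzB)
      rw [hz', hconst z hzB, ← hρf y (hball hyB)]
      exact hyc
    exact mem_interior.2 ⟨Metric.ball x r, hsub, Metric.isOpen_ball, Metric.mem_ball_self hr⟩
  have hU₁ : (U ∩ interior {y | ρ y = c}).Nonempty :=
    ⟨x₀, hx₀, mem_interior_iff_mem_nhds.2 hloc⟩
  by_cases hU₂ : (U ∩ (closure (interior {y | ρ y = c}))ᶜ).Nonempty
  · exfalso
    have hsub : U ⊆ interior {y | ρ y = c} ∪ (closure (interior {y | ρ y = c}))ᶜ := by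
      intro x hx
      by_cases hcl : x ∈ closure (interior {y | ρ y = c})
      · exact Or.inl (key x hx hcl)
      · exact Or.inr hcl
    obtain ⟨p, hpU, hp1, hp2⟩ := hpre _ _ isOpen_interior isClosed_closure.isOpen_compl
      hsub hU₁ hU₂
    exact hp2 (subset_closure hp1)
  · intro x hx
    have hxcl : x ∈ closure (interior {y | ρ y = c}) := by
      by_contra hcon
      exact hU₂ ⟨x, hx, hcon⟩
    have hmem : x ∈ {y | ρ y = c} := interior_subset (key x hx hxcl)
    exact hmem

end main


/-- For two real-valued pluriharmonic functions `ρ₁, ρ₂` on a connected open subset of a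
complex normed space, the differentials `dρ₁, dρ₂` are linearly dependent (equivalently,
some nontrivial combination `a₁ρ₁ + a₂ρ₂` is constant) iff `dρ₁ ∧ dρ₂ ≡ 0`. -/
theorem stmt13 {E : Type*} [NormedAddCommGroup E] [NormedSpace ℂ E]
    (U : Set E) (hU : IsOpen U) (hconn : IsConnected U)
    (ρ₁ ρ₂ : E → ℝ) (h₁ : PluriharmonicOn ρ₁ U) (h₂ : PluriharmonicOn ρ₂ U) :
    (∃ a₁ a₂ : ℝ, ¬(a₁ = 0 ∧ a₂ = 0) ∧ ∃ c : ℝ, ∀ x ∈ U, a₁ * ρ₁ x + a₂ * ρ₂ x = c)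
      ↔ ∀ x ∈ U, ∀ v w : E,
          fderiv ℝ ρ₁ x v * fderiv ℝ ρ₂ x w = fderiv ℝ ρ₁ x w * fderiv ℝ ρ₂ x v := by
  obtain ⟨x₀', hx₀'⟩ := hconn.nonempty
  constructor
  · rintro ⟨a₁, a₂, hne, c, hc⟩ x hx v w
    obtain ⟨V₁, hV₁, hV₁U, f₁, hf₁, hρ₁⟩ := h₁ x hx
    obtain ⟨V₂, hV₂, hV₂U, f₂, hf₂, hρ₂⟩ := h₂ x hx
    have hd₁ : DifferentiableAt ℝ ρ₁ x := (aux_fderivRe hf₁ hρ₁ hV₁).1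
    have hd₂ : DifferentiableAt ℝ ρ₂ x := (aux_fderivRe hf₂ hρ₂ hV₂).1
    have hcomb : HasFDerivAt (fun y => a₁ * ρ₁ y + a₂ * ρ₂ y)
        (a₁ • fderiv ℝ ρ₁ x + a₂ • fderiv ℝ ρ₂ x) x :=
      (hd₁.hasFDerivAt.const_mul a₁).add (hd₂.hasFDerivAt.const_mul a₂)
    have hev : (fun y => a₁ * ρ₁ y + a₂ * ρ₂ y) =ᶠ[nhds x] fun _ => c := by
      filter_upwards [hU.mem_nhds hx] with y hy using hc y hy
    have h0 : HasFDerivAt (fun y => a₁ * ρ₁ y + a₂ * ρ₂ y) (0 : E →L[ℝ] ℝ) x :=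
      (hasFDerivAt_const c x).congr_of_eventuallyEq hev
    have huniq := hcomb.unique h0
    have happv := congrFun (congrArg (fun (L : E →L[ℝ] ℝ) => (L : E → ℝ)) huniq) v
    have happw := congrFun (congrArg (fun (L : E →L[ℝ] ℝ) => (L : E → ℝ)) huniq) w
    simp only [ContinuousLinearMap.add_apply, ContinuousLinearMap.coe_smul',
      Pi.smul_apply, ContinuousLinearMap.zero_apply, smul_eq_mul,
      ContinuousLinearMap.coe_add'] at happv happw
    by_cases ha₁ : a₁ = 0
    · have ha₂ : a₂ ≠ 0 := fun h' => hne ⟨ha₁, h'⟩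
      rw [ha₁, zero_mul, zero_add] at happv happw
      have h2v : fderiv ℝ ρ₂ x v = 0 := (mul_eq_zero.mp happv).resolve_left ha₂
      have h2w : fderiv ℝ ρ₂ x w = 0 := (mul_eq_zero.mp happw).resolve_left ha₂
      rw [h2v, h2w]
      ring
    · have key : a₁ * (fderiv ℝ ρ₁ x v * fderiv ℝ ρ₂ x w
          - fderiv ℝ ρ₁ x w * fderiv ℝ ρ₂ x v) = 0 := by
        linear_combination (fderiv ℝ ρ₂ x w) * happv - (fderiv ℝ ρ₂ x v) * happw
      have := (mul_eq_zero.mp key).resolve_left ha₁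
      linarith
  · intro hwedge
    by_cases hA : ∀ x ∈ U, ∀ v, fderiv ℝ ρ₁ x v = 0
    · obtain ⟨r, hr, hball, f₁, f₂, hf₁, hf₂, hρf₁, hρf₂⟩ := aux_rep_ball h₁ h₂ hx₀'
      have hz : ∀ p ∈ Metric.ball x₀' r, fderiv ℂ f₁ p = 0 := by
        intro p hp
        apply aux_fzero
        intro w
        rw [← (aux_fderivRe hf₁ hρf₁ (Metric.isOpen_ball.mem_nhds hp)).2 w]
        exact hA p (hball hp) w
      have hconst := aux_holoConstProp Metric.isOpen_ball (convex_ball x₀' r) hf₁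
        (Metric.mem_ball_self hr) (Metric.isOpen_ball.mem_nhds (Metric.mem_ball_self hr)) hz
      have hloc : ∀ᶠ y in nhds x₀', ρ₁ y = ρ₁ x₀' := by
        filter_upwards [Metric.ball_mem_nhds x₀' hr] with y hy
        rw [hρf₁ y hy, hconst y hy, ← hρf₁ x₀' (Metric.mem_ball_self hr)]
      have hprop := aux_propagation hU hconn.isPreconnected h₁ hx₀' hloc
      exact ⟨1, 0, by simp, ρ₁ x₀', fun x hx => by simp [hprop x hx]⟩
    · push_neg at hA
      obtain ⟨x₀, hx₀U, v₀, hv₀⟩ := hA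
      obtain ⟨r, hr, hball, f₁, f₂, hf₁, hf₂, hρf₁, hρf₂⟩ := aux_rep_ball h₁ h₂ hx₀U
      have hx₀B : x₀ ∈ Metric.ball x₀ r := Metric.mem_ball_self hr
      have hfder : ∀ y ∈ Metric.ball x₀ r, (∀ w, fderiv ℝ ρ₁ y w = (fderiv ℂ f₁ y w).re)
          ∧ (∀ w, fderiv ℝ ρ₂ y w = (fderiv ℂ f₂ y w).re) := fun y hy =>
        ⟨(aux_fderivRe hf₁ hρf₁ (Metric.isOpen_ball.mem_nhds hy)).2,
         (aux_fderivRe hf₂ hρf₂ (Metric.isOpen_ball.mem_nhds hy)).2⟩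
      have hdep : ∀ y ∈ Metric.ball x₀ r, fderiv ℂ f₁ y = 0 ∨
          ∃ s : ℝ, ∀ w, fderiv ℂ f₂ y w = (s:ℂ) * fderiv ℂ f₁ y w := by
        intro y hy
        apply aux_pointwise
        intro v w
        rw [← (hfder y hy).1 v, ← (hfder y hy).1 w, ← (hfder y hy).2 v, ← (hfder y hy).2 w]
        exact hwedge y (hball hy) v w
      have hu : fderiv ℂ f₁ x₀ v₀ ≠ 0 := by
        intro hcon
        apply hv₀
        rw [(hfder x₀ hx₀B).1 v₀, hcon]
        simp
      obtain ⟨μ, hμ⟩ := (hdep x₀ hx₀B).resolve_left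
        (fun hcon => hu (by rw [hcon]; simp))
      have hBall := aux_ballLemma Metric.isOpen_ball (convex_ball x₀ r) hf₁ hf₂ hdep hx₀B hμ hu
      set c₀ : ℝ := (f₂ x₀ - (μ:ℂ) * f₁ x₀).re with hc₀
      have hGpl : PluriharmonicOn (fun y => ρ₂ y - μ * ρ₁ y) U := by
        intro x hx
        obtain ⟨V₁, hV₁, hV₁U, g₁, hg₁, hρg₁⟩ := h₁ x hx
        obtain ⟨V₂, hV₂, hV₂U, g₂, hg₂, hρg₂⟩ := h₂ x hx
        refine ⟨V₁ ∩ V₂, Filter.inter_mem hV₁ hV₂, fun y hy => hV₁U hy.1,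
          fun y => g₂ y - (μ:ℂ) * g₁ y,
          (hg₂.mono inter_subset_right).sub ((hg₁.mono inter_subset_left).const_mul _), ?_⟩
        intro y hy
        show ρ₂ y - μ * ρ₁ y = (g₂ y - (μ:ℂ) * g₁ y).re
        rw [hρg₁ y hy.1, hρg₂ y hy.2]
        simp [Complex.sub_re, Complex.mul_re]
      have hloc : ∀ᶠ y in nhds x₀, (fun y => ρ₂ y - μ * ρ₁ y) y = c₀ := by
        filter_upwards [Metric.ball_mem_nhds x₀ hr] with y hy
        have hb := hBall y hy
        have : (f₂ y - (μ:ℂ) * f₁ y).re = c₀ := by rw [hb]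
        rw [hρf₁ y hy, hρf₂ y hy, ← this]
        simp [Complex.sub_re, Complex.mul_re]
      have hprop := aux_propagation hU hconn.isPreconnected hGpl hx₀U hloc
      refine ⟨-μ, 1, by simp, c₀, fun x hx => ?_⟩
      have := hprop x hx
      linarith
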